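/- Every finite potential game admits at least one pure Nash equilibrium. -/
import Mathlib

/-- Every finite potential game admits at least one pure Nash equilibrium. -/
theorem finite_potential_game_has_pure_nash
    {ι : Type*} [Fintype ι] [Nonempty ι] [DecidableEq ι]
    {A : ι → Type*} [∀ i, Fintype (A i)] [∀ i, Nonempty (A i)]
    (U : ∀ i, (∀ j, A j) → ℝ) (φ : (∀ j, A j) → ℝ)
    (hpot : ∀ (i : ι) (a : ∀ j, A j) (x y : A i),
      U i (Function.update a i x) - U i (Function.update a i y)
        = φ (Function.update a i x) - φ (Function.update a i y)) :
    ∃ astar : ∀ j, A j, ∀ (i : ι) (x : A i),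
      U i (Function.update astar i x) ≤ U i astar := by
  obtain ⟨astar, -, hmax⟩ := Finset.exists_max_image Finset.univ φ ⟨Classical.arbitrary _, Finset.mem_univ _⟩
  refine ⟨astar, fun i x => ?_⟩
  have h := hpot i astar x (astar i)
  rw [Function.update_eq_self] at h
  have := hmax (Function.update astar i x) (Finset.mem_univ _)
  linarith
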